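/- The map σ : 𝒟^N → 𝒟^N defined on basis elements by σ(t^i D^j A) = (−1)^{j+1} t^i (D+i)^j Aᵀ (for i∈ℤ, j∈ℤ≥0, A∈gl_N, where Aᵀ is the transpose of A) is an isomorphism of Lie algebras. -/

import Mathlib

noncomputable section

open scoped BigOperators

attribute [local instance] LieRing.ofAssociativeRing

/-- The underlying space `ℂ^N[t,t⁻¹]`; the coefficient of `t^k` is stored at index `k`. -/
abbrev MN (N : ℕ) : Type := ℤ →₀ (Fin N → ℂ)

/-- The operator `t^i D^j A` on `ℂ^N[t,t⁻¹]` (where `D = t d/dt`):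
`t^i D^j A ⬝ (t^k v) = k^j t^{i+k} (A v)`.  This realizes `𝒟^N` faithfully as operators. -/
def gen (N : ℕ) (i : ℤ) (j : ℕ) (A : Matrix (Fin N) (Fin N) ℂ) : Module.End ℂ (MN N) :=
  Finsupp.lsum ℂ fun k : ℤ => (Finsupp.lsingle (k + i)) ∘ₗ (((k : ℂ) ^ j) • A.mulVecLin)

/-- `𝒟^N`, the Lie algebra of `N × N`-matrix differential operators on the circle, realized
as the Lie subalgebra of endomorphisms of `ℂ^N[t,t⁻¹]` generated (in fact spanned) by the
operators `t^i D^j A`. -/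
def DNlie (N : ℕ) : LieSubalgebra ℂ (Module.End ℂ (MN N)) :=
  LieSubalgebra.lieSpan ℂ (Module.End ℂ (MN N))
    {x | ∃ (i : ℤ) (j : ℕ) (A : Matrix (Fin N) (Fin N) ℂ), x = gen N i j A}

/-- The operator `(-1)^{j+1} t^i (D+i)^j Aᵀ`, the image of `t^i D^j A` under `σ`:
`t^k v ↦ (-1)^{j+1} (k+i)^j t^{k+i} (Aᵀ v)`. -/
def genSigma (N : ℕ) (i : ℤ) (j : ℕ) (A : Matrix (Fin N) (Fin N) ℂ) :
    Module.End ℂ (MN N) :=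
  Finsupp.lsum ℂ fun k : ℤ =>
    (Finsupp.lsingle (k + i)) ∘ₗ
      (((-1 : ℂ) ^ (j + 1) * ((k : ℂ) + (i : ℂ)) ^ j) • A.transpose.mulVecLin)


open Matrix Finsupp


lemma gen_single (N : ℕ) (i : ℤ) (j : ℕ) (A : Matrix (Fin N) (Fin N) ℂ) (k : ℤ) (v : Fin N → ℂ) :
    gen N i j A (Finsupp.single k v)
      = Finsupp.single (k + i) (((k : ℂ) ^ j) • (A *ᵥ v)) := by
  rw [gen, Finsupp.lsum_single]
  simp only [LinearMap.comp_apply, LinearMap.smul_apply, Matrix.mulVecLin_apply,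
    Finsupp.lsingle_apply, Finsupp.smul_single]

lemma genSigma_single (N : ℕ) (i : ℤ) (j : ℕ) (A : Matrix (Fin N) (Fin N) ℂ) (k : ℤ)
    (v : Fin N → ℂ) :
    genSigma N i j A (Finsupp.single k v)
      = Finsupp.single (k + i) ((((-1 : ℂ) ^ (j + 1) * ((k : ℂ) + (i : ℂ)) ^ j)) • (Aᵀ *ᵥ v)) := by
  rw [genSigma, Finsupp.lsum_single]
  simp only [LinearMap.comp_apply, LinearMap.smul_apply, Matrix.mulVecLin_apply,
    Finsupp.lsingle_apply, Finsupp.smul_single]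

def dotl (N : ℕ) : (Fin N → ℂ) →ₗ[ℂ] (Fin N → ℂ) →ₗ[ℂ] ℂ :=
  LinearMap.mk₂ ℂ (fun v w => v ⬝ᵥ w)
    (fun _ _ _ => add_dotProduct _ _ _)
    (fun _ _ _ => smul_dotProduct _ _ _)
    (fun _ _ _ => dotProduct_add _ _ _)
    (fun _ _ _ => dotProduct_smul _ _ _)

def Bp (N : ℕ) : MN N →ₗ[ℂ] MN N →ₗ[ℂ] ℂ :=
  Finsupp.lsum ℂ fun k : ℤ =>
    (LinearMap.lcomp ℂ ℂ (Finsupp.lapply (-k) : MN N →ₗ[ℂ] (Fin N → ℂ))) ∘ₗ dotl N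

lemma Bp_single (N : ℕ) (k : ℤ) (v : Fin N → ℂ) (g : MN N) :
    Bp N (Finsupp.single k v) g = v ⬝ᵥ g (-k) := by
  rw [Bp, Finsupp.lsum_single]
  simp only [LinearMap.comp_apply, LinearMap.lcomp_apply, Finsupp.lapply_apply, dotl,
    LinearMap.mk₂_apply]

lemma Bp_comm (N : ℕ) (f g : MN N) : Bp N f g = Bp N g f := by
  have key : Bp N = (Bp N).flip := by
    apply Finsupp.lhom_ext; intro k v
    apply Finsupp.lhom_ext; intro l w
    simp only [LinearMap.flip_apply, Bp_single, Finsupp.single_apply]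
    rcases eq_or_ne l (-k) with h | h
    · subst h; simp [dotProduct_comm]
    · rw [if_neg h, if_neg (show k ≠ -l by omega)]
      simp
  conv_lhs => rw [key]
  rfl

lemma Bp_nondeg (N : ℕ) (g : MN N) (h : ∀ f, Bp N f g = 0) : g = 0 := by
  ext k i0
  have := h (Finsupp.single (-k) (Pi.single i0 1))
  rw [Bp_single, neg_neg, single_dotProduct, one_mul] at this
  simpa using this

def IsAdj (N : ℕ) (X Y : Module.End ℂ (MN N)) : Prop :=
  ∀ f g, Bp N (X f) g = Bp N f (Y g)

lemma IsAdj.unique {N : ℕ} {X Y Y' : Module.End ℂ (MN N)} (h : IsAdj N X Y)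
    (h' : IsAdj N X Y') : Y = Y' := by
  apply LinearMap.ext; intro g
  have hz : Y g - Y' g = 0 := by
    apply Bp_nondeg
    intro f
    rw [map_sub, ← h f g, ← h' f g, sub_self]
  exact sub_eq_zero.mp hz

lemma IsAdj.symm {N : ℕ} {X Y : Module.End ℂ (MN N)} (h : IsAdj N X Y) : IsAdj N Y X := by
  intro f g
  rw [Bp_comm, ← h g f, Bp_comm]

lemma isAdj_gen (N : ℕ) (i : ℤ) (j : ℕ) (A : Matrix (Fin N) (Fin N) ℂ) :
    IsAdj N (gen N i j A) (-(genSigma N i j A)) := by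
  have key : (Bp N) ∘ₗ (gen N i j A)
      = (LinearMap.lcomp ℂ ℂ (-(genSigma N i j A))) ∘ₗ (Bp N) := by
    apply Finsupp.lhom_ext; intro k v
    apply Finsupp.lhom_ext; intro l w
    simp only [LinearMap.comp_apply, LinearMap.lcomp_apply, LinearMap.neg_apply,
      gen_single, genSigma_single, map_neg, Bp_single, Finsupp.single_apply,
      Finsupp.neg_apply]
    rcases eq_or_ne l (-(k + i)) with h | h
    · rw [if_pos h, if_pos (by omega)]
      have hl : (l : ℂ) + i = -(k : ℂ) := by
        have : (l : ℤ) + i = -k := by omega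
        have h2 : ((l + i : ℤ) : ℂ) = ((-k : ℤ) : ℂ) := by rw [this]
        push_cast at h2
        exact h2
      rw [hl]
      rw [smul_dotProduct, dotProduct_smul]
      rw [show (v ⬝ᵥ Aᵀ *ᵥ w) = (A *ᵥ v) ⬝ᵥ w by
        rw [Matrix.dotProduct_mulVec, Matrix.vecMul_transpose]]
      rw [smul_eq_mul, smul_eq_mul, neg_pow ((k:ℂ)) j]
      have hsgn : ((-1 : ℂ)) ^ (j + 1) * (-1) ^ j = -1 := by
        rw [pow_succ, mul_comm ((-1:ℂ)^j) (-1), mul_assoc, ← pow_add, ← two_mul,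
          pow_mul]; norm_num
      have h3 : ((-1:ℂ))^(j+1) * ((-1)^j * (k:ℂ)^j) = -(k:ℂ)^j := by
        rw [← mul_assoc, hsgn]; ring
      rw [h3]; ring
    · rw [if_neg h, if_neg (by omega)]
      simp
  intro f g
  exact LinearMap.congr_fun (LinearMap.congr_fun key f) g

lemma gen_mem (N : ℕ) (i : ℤ) (j : ℕ) (A : Matrix (Fin N) (Fin N) ℂ) :
    gen N i j A ∈ DNlie N :=
  LieSubalgebra.subset_lieSpan ⟨i, j, A, rfl⟩

lemma genSigma_eq_sum (N : ℕ) (i : ℤ) (j : ℕ) (A : Matrix (Fin N) (Fin N) ℂ) :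
    genSigma N i j A = ∑ m ∈ Finset.range (j + 1),
      ((-1 : ℂ) ^ (j + 1) * (j.choose m : ℂ) * (i : ℂ) ^ (j - m)) • gen N i m Aᵀ := by
  apply Finsupp.lhom_ext; intro k v
  rw [genSigma_single]
  simp only [LinearMap.sum_apply, LinearMap.smul_apply, gen_single, Finsupp.smul_single]
  have hsum : ∀ (u : ℕ → (Fin N → ℂ)),
      ∑ m ∈ Finset.range (j + 1), Finsupp.single (k + i) (u m)
        = Finsupp.single (k + i) (∑ m ∈ Finset.range (j + 1), u m) := by
    intro u
    exact (map_sum (Finsupp.singleAddHom (k + i) : (Fin N → ℂ) →+ MN N) u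
      (Finset.range (j + 1))).symm
  rw [hsum]
  congr 1
  rw [Finset.sum_congr rfl (fun m _ => smul_smul
    ((-1 : ℂ) ^ (j + 1) * (j.choose m : ℂ) * (i : ℂ) ^ (j - m)) ((k:ℂ) ^ m) (Aᵀ *ᵥ v)),
    ← Finset.sum_smul]
  congr 1
  have := add_pow (k : ℂ) (i : ℂ) j
  rw [this, Finset.mul_sum]
  apply Finset.sum_congr rfl
  intro m _
  ring

lemma genSigma_mem (N : ℕ) (i : ℤ) (j : ℕ) (A : Matrix (Fin N) (Fin N) ℂ) :
    genSigma N i j A ∈ DNlie N := by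
  rw [genSigma_eq_sum]
  rw [← LieSubalgebra.mem_toSubmodule]
  exact Submodule.sum_mem _ fun m _ =>
    Submodule.smul_mem _ _ (by rw [LieSubalgebra.mem_toSubmodule]; exact gen_mem N i m Aᵀ)
lemma IsAdj.add' {N : ℕ} {X X' Y Y' : Module.End ℂ (MN N)} (h : IsAdj N X Y)
    (h' : IsAdj N X' Y') : IsAdj N (X + X') (Y + Y') := by
  intro f g
  have e1 : (X + X') f = X f + X' f := LinearMap.add_apply X X' f
  have e2 : (Y + Y') g = Y g + Y' g := LinearMap.add_apply Y Y' g
  rw [e1, e2, map_add, LinearMap.add_apply, map_add, h f g, h' f g]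

lemma IsAdj.smul' {N : ℕ} {X Y : Module.End ℂ (MN N)} (c : ℂ) (h : IsAdj N X Y) :
    IsAdj N (c • X) (c • Y) := by
  intro f g
  have e1 : (c • X) f = c • X f := LinearMap.smul_apply c X f
  have e2 : (c • Y) g = c • Y g := LinearMap.smul_apply c Y g
  rw [e1, e2, LinearMap.map_smul, LinearMap.smul_apply, (Bp N f).map_smul, smul_eq_mul,
    smul_eq_mul, h f g]

lemma IsAdj.neg' {N : ℕ} {X Y : Module.End ℂ (MN N)} (h : IsAdj N X Y) :
    IsAdj N (-X) (-Y) := by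
  intro f g
  have e1 : (-X) f = -(X f) := LinearMap.neg_apply X f
  have e2 : (-Y) g = -(Y g) := LinearMap.neg_apply Y g
  rw [e1, e2, map_neg, LinearMap.neg_apply, map_neg, h f g]

lemma IsAdj.lie' {N : ℕ} {X X' Y Y' : Module.End ℂ (MN N)} (h : IsAdj N X Y)
    (h' : IsAdj N X' Y') : IsAdj N ⁅X, X'⁆ ⁅Y', Y⁆ := by
  intro f g
  have e1 : (⁅X, X'⁆ : Module.End ℂ (MN N)) f = X (X' f) - X' (X f) := by
    rw [LieRing.of_associative_ring_bracket (A := Module.End ℂ (MN N)), LinearMap.sub_apply]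
    rfl
  have e2 : (⁅Y', Y⁆ : Module.End ℂ (MN N)) g = Y' (Y g) - Y (Y' g) := by
    rw [LieRing.of_associative_ring_bracket (A := Module.End ℂ (MN N)), LinearMap.sub_apply]
    rfl
  rw [e1, e2, map_sub, LinearMap.sub_apply, map_sub,
    h (X' f) g, h' f (Y g), h' (X f) g, h f (Y' g)]

/-- Elements of `DNlie` that have an adjoint in `DNlie`. -/
def Kset (N : ℕ) : LieSubalgebra ℂ (Module.End ℂ (MN N)) where
  carrier := {X | X ∈ DNlie N ∧ ∃ Y ∈ DNlie N, IsAdj N X Y}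
  add_mem' := by
    rintro a b ⟨ha, Y, hY, hA⟩ ⟨hb, Y', hY', hA'⟩
    exact ⟨add_mem ha hb, Y + Y', add_mem hY hY', hA.add' hA'⟩
  zero_mem' := ⟨zero_mem _, 0, zero_mem _, fun f g => by simp⟩
  smul_mem' := by
    rintro c x ⟨hx, Y, hY, hA⟩
    exact ⟨(DNlie N).smul_mem c hx, c • Y, (DNlie N).smul_mem c hY, hA.smul' c⟩
  lie_mem' := by
    rintro x y ⟨hx, Y, hY, hA⟩ ⟨hy, Y', hY', hA'⟩
    exact ⟨(DNlie N).lie_mem hx hy, ⁅Y', Y⁆, (DNlie N).lie_mem hY' hY, hA.lie' hA'⟩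

lemma DN_le_K (N : ℕ) : DNlie N ≤ Kset N := by
  rw [DNlie, LieSubalgebra.lieSpan_le]
  rintro x ⟨i, j, A, rfl⟩
  exact ⟨gen_mem N i j A, -(genSigma N i j A), neg_mem (genSigma_mem N i j A),
    isAdj_gen N i j A⟩

lemma exists_adj (N : ℕ) {x : Module.End ℂ (MN N)} (hx : x ∈ DNlie N) :
    ∃ Y ∈ DNlie N, IsAdj N x Y := (DN_le_K N hx).2

def adjOf (N : ℕ) (x : DNlie N) : Module.End ℂ (MN N) := (exists_adj N x.2).choose

lemma adjOf_mem (N : ℕ) (x : DNlie N) : adjOf N x ∈ DNlie N :=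
  (exists_adj N x.2).choose_spec.1

lemma adjOf_isAdj (N : ℕ) (x : DNlie N) :
    IsAdj N (x : Module.End ℂ (MN N)) (adjOf N x) :=
  (exists_adj N x.2).choose_spec.2

lemma adjOf_eq (N : ℕ) (x : DNlie N) {Y : Module.End ℂ (MN N)}
    (hA : IsAdj N (x : Module.End ℂ (MN N)) Y) : adjOf N x = Y :=
  (adjOf_isAdj N x).unique hA

def sigmaFun (N : ℕ) : DNlie N → DNlie N := fun x =>
  ⟨-(adjOf N x), neg_mem (adjOf_mem N x)⟩

lemma sigmaFun_coe (N : ℕ) (x : DNlie N) :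
    ((sigmaFun N x : DNlie N) : Module.End ℂ (MN N)) = -(adjOf N x) := rfl

lemma sigmaFun_invol (N : ℕ) (x : DNlie N) : sigmaFun N (sigmaFun N x) = x := by
  have h1 : IsAdj N ((sigmaFun N x : DNlie N) : Module.End ℂ (MN N))
      (-(x : Module.End ℂ (MN N))) :=
    (adjOf_isAdj N x).symm.neg'
  apply Subtype.ext
  rw [sigmaFun_coe, adjOf_eq N _ h1]
  exact neg_neg (x : Module.End ℂ (MN N))

set_option maxHeartbeats 1000000 in
def sigmaHom (N : ℕ) : DNlie N →ₗ⁅ℂ⁆ DNlie N where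
  toFun := sigmaFun N
  map_add' x y := by
    have hA : IsAdj N ((x + y : DNlie N) : Module.End ℂ (MN N))
        (adjOf N x + adjOf N y) := (adjOf_isAdj N x).add' (adjOf_isAdj N y)
    apply Subtype.ext
    show ((sigmaFun N (x + y) : DNlie N) : Module.End ℂ (MN N))
      = ((sigmaFun N x : DNlie N) : Module.End ℂ (MN N)) + (sigmaFun N y : DNlie N)
    rw [sigmaFun_coe, sigmaFun_coe, sigmaFun_coe, adjOf_eq N _ hA]
    abel
  map_smul' c x := by
    have hA : IsAdj N ((c • x : DNlie N) : Module.End ℂ (MN N))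
        (c • adjOf N x) := (adjOf_isAdj N x).smul' c
    apply Subtype.ext
    show ((sigmaFun N (c • x) : DNlie N) : Module.End ℂ (MN N))
      = c • ((sigmaFun N x : DNlie N) : Module.End ℂ (MN N))
    rw [sigmaFun_coe, sigmaFun_coe, adjOf_eq N _ hA]
    module
  map_lie' {x y} := by
    have hA : IsAdj N ((⁅x, y⁆ : DNlie N) : Module.End ℂ (MN N))
        ⁅adjOf N y, adjOf N x⁆ := (adjOf_isAdj N x).lie' (adjOf_isAdj N y)
    apply Subtype.ext
    show ((sigmaFun N ⁅x, y⁆ : DNlie N) : Module.End ℂ (MN N))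
      = ⁅((sigmaFun N x : DNlie N) : Module.End ℂ (MN N)),
          ((sigmaFun N y : DNlie N) : Module.End ℂ (MN N))⁆
    rw [sigmaFun_coe, sigmaFun_coe, sigmaFun_coe, adjOf_eq N _ hA]
    rw [LieRing.of_associative_ring_bracket (A := Module.End ℂ (MN N)), LieRing.of_associative_ring_bracket (A := Module.End ℂ (MN N))]
    noncomm_ring
    simp only [smul_mul_assoc, mul_smul_comm, smul_smul]
    norm_num
    abel

def sigmaEquiv (N : ℕ) : DNlie N ≃ₗ⁅ℂ⁆ DNlie N :=
  { sigmaHom N with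
    invFun := sigmaFun N
    left_inv := sigmaFun_invol N
    right_inv := sigmaFun_invol N }


/-- The map `σ : 𝒟^N → 𝒟^N`, `σ(t^i D^j A) = (-1)^{j+1} t^i (D+i)^j Aᵀ`, is an isomorphism
of Lie algebras. -/
theorem sigma_lie_isomorphism (N : ℕ) (hN : 1 ≤ N) :
    ∃ σ : DNlie N ≃ₗ⁅ℂ⁆ DNlie N,
      ∀ (i : ℤ) (j : ℕ) (A : Matrix (Fin N) (Fin N) ℂ) (h : gen N i j A ∈ DNlie N),
        ((σ ⟨gen N i j A, h⟩ : DNlie N) : Module.End ℂ (MN N)) = genSigma N i j A := by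
  refine ⟨sigmaEquiv N, ?_⟩
  intro i j A h
  have e : (sigmaEquiv N) ⟨gen N i j A, h⟩ = sigmaFun N ⟨gen N i j A, h⟩ := rfl
  have hA : IsAdj N ((⟨gen N i j A, h⟩ : DNlie N) : Module.End ℂ (MN N))
      (-(genSigma N i j A)) := isAdj_gen N i j A
  have e2 : adjOf N ⟨gen N i j A, h⟩ = -(genSigma N i j A) :=
    adjOf_eq N ⟨gen N i j A, h⟩ hA
  rw [e, sigmaFun_coe, e2]
  exact neg_neg (genSigma N i j A)
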